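/- For all natural numbers n and k with k ≤ n, the number of Hanna n-matrices having exactly n−k columns equal to (1,1) (i.e., both entries equal to the letter 1) equals C(n,k) · C(2k,k) · 2^k. Formally: the number of pairs of words w, w' : Fin n → Fin 3 such that the letter 0 occurs equally often in w and in w', and the number of positions i with w(i) = 0 and w'(i) = 0 is n−k, equals C(n,k) · C(2k,k) · 2^k. -/

import Mathlib

set_option maxRecDepth 10000
open Finset AddMonoidAlgebra

abbrev L := AddMonoidAlgebra ℕ ℤ

lemma L0_key :
    (single (1:ℤ) 2 + single 0 4 + single (-1) 2 : L) * single (1:ℤ) (1:ℕ)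
      = 2 * (single (1:ℤ) (1:ℕ) + 1) ^ 2 := by
  have hone : (single (0:ℤ) (1:ℕ) : L) = 1 := rfl
  have h2 : (2 : L) = single (0:ℤ) (2:ℕ) := by
    rw [show (2:L) = ((2:ℕ):L) by norm_cast, AddMonoidAlgebra.natCast_def]; simp
  rw [← hone, h2]
  simp only [add_mul, single_mul_single, pow_two, mul_add, add_mul, mul_add]
  norm_num
  ring

lemma L0_pow_coeff (k : ℕ) :
    ((single (1:ℤ) 2 + single 0 4 + single (-1) 2 : L) ^ k).coeff 0
      = (2*k).choose k * 2^k := by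
  set L0 : L := single (1:ℤ) 2 + single 0 4 + single (-1) 2 with hL0
  have h1 : (single (1:ℤ) (1:ℕ) : L) ^ k = single (k:ℤ) 1 := by
    rw [AddMonoidAlgebra.single_pow]; simp
  have h2 : L0 ^ k * single (k:ℤ) (1:ℕ) = 2 ^ k * (single (1:ℤ) (1:ℕ) + 1) ^ (2*k) := by
    rw [← h1, ← mul_pow, L0_key, mul_pow, ← pow_mul]
  have hterm : ∀ m : ℕ, ((single (1:ℤ) (1:ℕ):L) ^ m * 1 ^ (2*k - m) * ((2*k).choose m : L))
      = single (m:ℤ) ((2*k).choose m) := by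
    intro m
    rw [one_pow, mul_one, AddMonoidAlgebra.single_pow,
      show (((2*k).choose m : ℕ) : L) = single (0:ℤ) ((2*k).choose m) by
        rw [AddMonoidAlgebra.natCast_def]; norm_num,
      single_mul_single]
    norm_num
  have h3 : ((single (1:ℤ) (1:ℕ) + 1 : L) ^ (2*k)).coeff (k:ℤ) = (2*k).choose k := by
    rw [add_pow]
    simp_rw [hterm]
    rw [AddMonoidAlgebra.coeff_sum, Finset.sum_apply']
    rw [Finset.sum_eq_single_of_mem k (by simp [Nat.lt_succ_iff]; omega)]
    · rw [AddMonoidAlgebra.coeff_single_apply, if_pos rfl]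
    · intro m _ hm
      rw [AddMonoidAlgebra.coeff_single_apply, if_neg (by exact_mod_cast hm)]
  have h4 : (L0 ^ k * single (k:ℤ) (1:ℕ)).coeff (k:ℤ) = (L0 ^ k).coeff 0 * 1 := by
    rw [AddMonoidAlgebra.coeff_mul_single_apply]; norm_num
  have h5 : ((2:L) ^ k * (single (1:ℤ) (1:ℕ) + 1) ^ (2*k)).coeff (k:ℤ)
      = 2 ^ k * ((single (1:ℤ) (1:ℕ) + 1 : L) ^ (2*k)).coeff (k:ℤ) := by
    rw [show ((2:L)^k) = single (0:ℤ) (2^k : ℕ) by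
      rw [show (2:L) = ((2:ℕ):L) by norm_cast, AddMonoidAlgebra.natCast_def]
      rw [AddMonoidAlgebra.single_pow]; simp]
    rw [AddMonoidAlgebra.coeff_single_mul_apply]; simp
  rw [mul_one] at h4
  rw [← h4, h2, h5, h3, mul_comm]

abbrev A := AddMonoidAlgebra L ℤ

lemma Sn_coeff (n k : ℕ) (hk : k ≤ n) :
    (((single (1:ℤ) (1:L) + single 0 (single (1:ℤ) 2 + single 0 4 + single (-1) 2) : A) ^ n).coeff
        ((n-k : ℕ):ℤ)).coeff 0 = n.choose k * ((2*k).choose k) * 2^k := by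
  set L0 : L := single (1:ℤ) 2 + single 0 4 + single (-1) 2 with hL0
  have hterm : ∀ m : ℕ, ((single (1:ℤ) (1:L)) ^ m * (single (0:ℤ) L0) ^ (n - m) * (n.choose m : A))
      = single (m:ℤ) (L0 ^ (n-m) * (n.choose m : L)) := by
    intro m
    rw [AddMonoidAlgebra.single_pow, AddMonoidAlgebra.single_pow,
      AddMonoidAlgebra.natCast_def, single_mul_single, single_mul_single]
    norm_num
  have key : ((single (1:ℤ) (1:L) + single 0 L0 : A) ^ n).coeff ((n-k : ℕ):ℤ)
      = L0 ^ k * (n.choose (n-k) : L) := by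
    have hexp := add_pow (single (1:ℤ) (1:L)) (single (0:ℤ) L0) n
    simp_rw [hterm] at hexp
    rw [hexp, AddMonoidAlgebra.coeff_sum, Finset.sum_apply']
    rw [Finset.sum_eq_single_of_mem (n-k) (Finset.mem_range.mpr (by omega))]
    · rw [AddMonoidAlgebra.coeff_single_apply, if_pos rfl, show n - (n-k) = k by omega]
    · intro m _ hm
      rw [AddMonoidAlgebra.coeff_single_apply, if_neg (by exact_mod_cast hm)]
  rw [key]
  rw [show ((n.choose (n-k) : ℕ) : L) = single (0:ℤ) (n.choose (n-k)) by
    rw [AddMonoidAlgebra.natCast_def]; norm_num]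
  rw [AddMonoidAlgebra.coeff_mul_single_apply]
  rw [neg_zero, add_zero, L0_pow_coeff, Nat.choose_symm hk]
  ring


noncomputable def ee (c : Fin 3 × Fin 3) : ℤ := if c.1 = 0 ∧ c.2 = 0 then 1 else 0
noncomputable def dd (c : Fin 3 × Fin 3) : ℤ :=
  (if c.1 = 0 then 1 else 0) - (if c.2 = 0 then 1 else 0)

lemma S_eq : (∑ c : Fin 3 × Fin 3, single (ee c) (single (dd c) (1:ℕ)) : A)
    = single (1:ℤ) (1:L) + single 0 (single (1:ℤ) 2 + single 0 4 + single (-1) 2) := by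
  rw [show (1:L) = single (0:ℤ) 1 from rfl]
  rw [Fintype.sum_prod_type]
  simp only [Fin.sum_univ_three]
  have e10 : ((1:Fin 3) = 0) = False := by simp [Fin.ext_iff]
  have e20 : ((2:Fin 3) = 0) = False := by simp [Fin.ext_iff]
  simp only [ee, dd, eq_self_iff_true, e10, e20, true_and, and_true, and_false, false_and,
    and_self, if_true, if_false, sub_self, sub_zero, zero_sub]
  rw [show (2:ℕ) = 1+1 from rfl, show (4:ℕ) = 1+1+1+1 from rfl]
  simp only [AddMonoidAlgebra.single_add]
  abel

lemma count_eq (n k : ℕ) :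
    (((Finset.univ : Finset ((Fin n → Fin 3) × (Fin n → Fin 3))).filter (fun p =>
        (Finset.univ.filter (fun i => p.1 i = 0)).card
          = (Finset.univ.filter (fun i => p.2 i = 0)).card ∧
        (Finset.univ.filter (fun i => p.1 i = 0 ∧ p.2 i = 0)).card = n - k)).card : ℕ)
    = (((∑ c : Fin 3 × Fin 3, single (ee c) (single (dd c) (1:ℕ)) : A) ^ n).coeff
        ((n-k : ℕ):ℤ)).coeff 0 := by
  have hpow : ((∑ c : Fin 3 × Fin 3, single (ee c) (single (dd c) (1:ℕ)) : A) ^ n)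
      = ∑ f ∈ Fintype.piFinset (fun _ : Fin n => (univ : Finset (Fin 3 × Fin 3))),
          single (∑ i, ee (f i)) (single (∑ i, dd (f i)) (1:ℕ)) := by
    rw [show ((∑ c : Fin 3 × Fin 3, single (ee c) (single (dd c) (1:ℕ)) : A) ^ n)
        = ∏ _i : Fin n, (∑ c : Fin 3 × Fin 3, single (ee c) (single (dd c) (1:ℕ)) : A)
      by rw [Fin.prod_const],
      Finset.prod_univ_sum (fun _ : Fin n => (univ : Finset (Fin 3 × Fin 3)))
        (fun _ c => single (ee c) (single (dd c) (1:ℕ)))]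
    refine Finset.sum_congr rfl fun f _ => ?_
    rw [AddMonoidAlgebra.prod_single, AddMonoidAlgebra.prod_single]
    simp
  rw [hpow, AddMonoidAlgebra.coeff_sum, Finset.sum_apply', AddMonoidAlgebra.coeff_sum, Finset.sum_apply']
  have : ∀ f : Fin n → Fin 3 × Fin 3,
      ((single (∑ i, ee (f i)) (single (∑ i, dd (f i)) (1:ℕ)) : A).coeff ((n-k:ℕ):ℤ)).coeff 0
      = if (∑ i, ee (f i)) = ((n-k:ℕ):ℤ) ∧ (∑ i, dd (f i)) = 0 then 1 else 0 := by
    intro f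
    rw [AddMonoidAlgebra.coeff_single_apply]
    by_cases h1 : (∑ i, ee (f i)) = ((n-k:ℕ):ℤ)
    · rw [if_pos h1, AddMonoidAlgebra.coeff_single_apply]
      by_cases h2 : (∑ i, dd (f i)) = 0
      · rw [if_pos h2, if_pos ⟨h1, h2⟩]
      · rw [if_neg h2, if_neg (by tauto)]
    · rw [if_neg h1, if_neg (by tauto)]
      rfl
  simp_rw [this]
  rw [← Finset.card_filter]
  apply Finset.card_nbij' (fun p => fun i => (p.1 i, p.2 i))
    (fun f => (fun i => (f i).1, fun i => (f i).2))
  · intro p hp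
    simp only [Finset.mem_coe, Finset.mem_filter, Finset.mem_univ, true_and] at hp
    simp only [Finset.mem_coe, Finset.mem_filter, Fintype.mem_piFinset, Finset.mem_univ, true_and,
      implies_true]
    obtain ⟨h1, h2⟩ := hp
    constructor
    · simp only [ee]
      rw [Finset.sum_boole, h2]
    · simp only [dd, Finset.sum_sub_distrib]
      rw [Finset.sum_boole, Finset.sum_boole, sub_eq_zero]
      exact_mod_cast h1
  · intro f hf
    simp only [Finset.mem_coe, Finset.mem_filter, Fintype.mem_piFinset] at hf
    simp only [Finset.mem_coe, Finset.mem_filter, Finset.mem_univ, true_and]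
    obtain ⟨-, h1, h2⟩ := hf
    constructor
    · simp only [dd, Finset.sum_sub_distrib] at h2
      rw [Finset.sum_boole, Finset.sum_boole, sub_eq_zero] at h2
      exact_mod_cast h2
    · simp only [ee] at h1
      rw [Finset.sum_boole] at h1
      exact_mod_cast h1
  · intro p _; rfl
  · intro f _; rfl

theorem hanna_matrices_count_by_one_one_columns (n k : ℕ) (hk : k ≤ n) :
    ((Finset.univ : Finset ((Fin n → Fin 3) × (Fin n → Fin 3))).filter (fun p =>
        (Finset.univ.filter (fun i => p.1 i = 0)).card
          = (Finset.univ.filter (fun i => p.2 i = 0)).card ∧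
        (Finset.univ.filter (fun i => p.1 i = 0 ∧ p.2 i = 0)).card = n - k)).card
      = n.choose k * (2 * k).choose k * 2 ^ k := by
  rw [count_eq n k, S_eq, Sn_coeff n k hk]
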